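/- For the transformed exponential distribution with density g(x;λ,θ) = θe^{−θx}(1 + λ(2e^{−θx} − 1)) on (0,∞), the r-th raw moment equals E(X^r) = (1 + λ(2^{−r} − 1))·r!/θ^r for every natural number r ≥ 1. -/

import Mathlib

open MeasureTheory

lemma aux_integrable {b : ℝ} (hb : 0 < b) (r : ℕ) :
    IntegrableOn (fun x : ℝ => x ^ r * Real.exp (-(b * x))) (Set.Ioi 0) := by
  have h := integrableOn_rpow_mul_exp_neg_mul_rpow (p := 1) (s := (r : ℝ)) (b := b)
    (by exact lt_of_lt_of_le (by norm_num) (Nat.cast_nonneg r)) one_pos hb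
  refine h.congr_fun (fun x hx => ?_) measurableSet_Ioi
  rw [Set.mem_Ioi] at hx
  beta_reduce
  rw [Real.rpow_natCast, Real.rpow_one, neg_mul]

lemma aux_integral {b : ℝ} (hb : 0 < b) (r : ℕ) :
    ∫ x in Set.Ioi (0 : ℝ), x ^ r * Real.exp (-(b * x))
      = (Nat.factorial r) / b ^ (r + 1) := by
  have h := Real.integral_rpow_mul_exp_neg_mul_Ioi (a := (r : ℝ) + 1) (r := b)
    (by positivity) hb
  rw [show ((r : ℝ) + 1 - 1) = (r : ℝ) by ring] at h
  rw [Real.Gamma_nat_eq_factorial] at h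
  calc ∫ x in Set.Ioi (0 : ℝ), x ^ r * Real.exp (-(b * x))
      = ∫ x in Set.Ioi (0 : ℝ), x ^ (r : ℝ) * Real.exp (-(b * x)) := by
        refine setIntegral_congr_fun measurableSet_Ioi (fun x hx => ?_)
        rw [Real.rpow_natCast]
    _ = (1 / b) ^ ((r : ℝ) + 1) * (Nat.factorial r) := h
    _ = (Nat.factorial r) / b ^ (r + 1) := by
        rw [show ((r : ℝ) + 1) = ((r + 1 : ℕ) : ℝ) by push_cast; ring,
          Real.rpow_natCast]
        field_simp
        rw [← mul_pow, one_div_mul_cancel hb.ne', one_pow]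

/-- For the transformed exponential distribution with density
`g(x) = θe^{−θx}(1 + λ(2e^{−θx} − 1))` on `(0,∞)`, the `r`-th raw moment is
`(1 + λ(2^{−r} − 1)) r! / θ^r`. -/
theorem transformed_exponential_moments (θ lam : ℝ) (hθ : 0 < θ)
    (hlam : lam ∈ Set.Icc (-1 : ℝ) 1) (r : ℕ) (hr : 1 ≤ r) :
    ∫ x in Set.Ioi (0 : ℝ),
        x ^ r * (θ * Real.exp (-θ * x) * (1 + lam * (2 * Real.exp (-θ * x) - 1)))
      = (1 + lam * ((2 : ℝ) ^ (-(r : ℝ)) - 1)) * (Nat.factorial r) / θ ^ r := by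
  have h2θ : 0 < 2 * θ := by positivity
  have hsplit : ∀ x ∈ Set.Ioi (0 : ℝ),
      x ^ r * (θ * Real.exp (-θ * x) * (1 + lam * (2 * Real.exp (-θ * x) - 1)))
        = (θ * (1 - lam)) * (x ^ r * Real.exp (-(θ * x)))
          + (2 * θ * lam) * (x ^ r * Real.exp (-(2 * θ * x))) := by
    intro x _
    have : Real.exp (-(2 * θ * x)) = Real.exp (-(θ * x)) * Real.exp (-(θ * x)) := by
      rw [← Real.exp_add]; ring_nf
    rw [this]
    rw [show -θ * x = -(θ * x) by ring]
    ring
  rw [setIntegral_congr_fun measurableSet_Ioi hsplit]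
  rw [integral_add ((aux_integrable hθ r).const_mul _) ((aux_integrable h2θ r).const_mul _),
    integral_const_mul, integral_const_mul, aux_integral hθ r, aux_integral h2θ r]
  have hθr : (θ : ℝ) ^ r ≠ 0 := by positivity
  have hθr1 : (θ : ℝ) ^ (r + 1) ≠ 0 := by positivity
  rw [Real.rpow_neg (by norm_num), Real.rpow_natCast]
  rw [mul_pow]
  have h2r : (2 : ℝ) ^ (r + 1) ≠ 0 := by positivity
  field_simp
  ring
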